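/- Let H be a real inner product space, K a complete submodule of H with orthogonal projection P onto K, S a nonempty subset of H, F : H → ℝ, and λ > 0. Define the penalized criterion ℒ(x) = F(x) − λ‖x − P x‖². Suppose (μ_t)_{t∈ℕ} is a sequence in S such that for every t, μ_{t+1} maximizes ν ↦ F(ν) − λ‖ν − P μ_t‖² over S, i.e., μ_{t+1} ∈ S and F(ν) − λ‖ν − P μ_t‖² ≤ F(μ_{t+1}) − λ‖μ_{t+1} − P μ_t‖² for all ν ∈ S. Then the sequence t ↦ ℒ(μ_t) is monotone non-decreasing; moreover, if F is bounded above on S, then ℒ(μ_t) converges to a real limit. -/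

import Mathlib

/-- Resolution by Information Relaxation: if each iterate `μ (t+1)` maximizes the
proximal criterion `ν ↦ F ν - λ‖ν - P (μ t)‖²` over `S`, then the penalized
criterion `ℒ(x) = F x - λ‖x - P x‖²` is non-decreasing along the iterates, and if
`F` is bounded above on `S` then `ℒ(μ t)` converges to a real limit. -/
theorem information_relaxation_monotone_converges
    {H : Type*} [NormedAddCommGroup H] [InnerProductSpace ℝ H]
    (K : Submodule ℝ H) [CompleteSpace K]
    (S : Set H) (hS : S.Nonempty) (F : H → ℝ) (lam : ℝ) (hlam : 0 < lam)
    (μ : ℕ → H) (hμS : ∀ t, μ t ∈ S)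
    (hmax : ∀ t, ∀ ν ∈ S,
      F ν - lam * ‖ν - (Submodule.orthogonalProjectionOnto K (μ t) : H)‖ ^ 2 ≤
        F (μ (t + 1)) - lam * ‖μ (t + 1) - (Submodule.orthogonalProjectionOnto K (μ t) : H)‖ ^ 2) :
    Monotone (fun t => F (μ t) - lam * ‖μ t - (Submodule.orthogonalProjectionOnto K (μ t) : H)‖ ^ 2) ∧
      (BddAbove (F '' S) →
        ∃ l : ℝ,
          Filter.Tendsto
            (fun t => F (μ t) - lam * ‖μ t - (Submodule.orthogonalProjectionOnto K (μ t) : H)‖ ^ 2)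
            Filter.atTop (nhds l)) := by
  set L : ℕ → ℝ := fun t => F (μ t) - lam * ‖μ t - (Submodule.orthogonalProjectionOnto K (μ t) : H)‖ ^ 2
    with hL
  have hmin : ∀ (y : H) (v : H), v ∈ K →
      ‖y - (Submodule.orthogonalProjectionOnto K y : H)‖ ≤ ‖y - v‖ := by
    intro y v hv
    rw [← Submodule.starProjection_apply, Submodule.starProjection_minimal]
    exact ciInf_le ⟨0, fun x ⟨u, hu⟩ => hu ▸ norm_nonneg _⟩ (⟨v, hv⟩ : K)
  have hmono : Monotone L := by
    apply monotone_nat_of_le_succ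
    intro t
    have h1 : L t ≤ F (μ (t + 1)) - lam * ‖μ (t + 1) - (Submodule.orthogonalProjectionOnto K (μ t) : H)‖ ^ 2 :=
      hmax t (μ t) (hμS t)
    have h2 : ‖μ (t + 1) - (Submodule.orthogonalProjectionOnto K (μ (t + 1)) : H)‖ ≤
        ‖μ (t + 1) - (Submodule.orthogonalProjectionOnto K (μ t) : H)‖ :=
      hmin _ _ (Submodule.orthogonalProjectionOnto K (μ t)).2
    have h3 : ‖μ (t + 1) - (Submodule.orthogonalProjectionOnto K (μ (t + 1)) : H)‖ ^ 2 ≤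
        ‖μ (t + 1) - (Submodule.orthogonalProjectionOnto K (μ t) : H)‖ ^ 2 :=
      pow_le_pow_left₀ (norm_nonneg _) h2 2
    have := mul_le_mul_of_nonneg_left h3 hlam.le
    show L t ≤ L (t + 1)
    simp only [hL] at h1 ⊢
    linarith
  refine ⟨hmono, fun hbdd => ?_⟩
  obtain ⟨M, hM⟩ := hbdd
  have hub : ∀ t, L t ≤ M := by
    intro t
    have hF : F (μ t) ≤ M := hM ⟨μ t, hμS t, rfl⟩
    have : 0 ≤ lam * ‖μ t - (Submodule.orthogonalProjectionOnto K (μ t) : H)‖ ^ 2 :=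
      mul_nonneg hlam.le (sq_nonneg _)
    simp only [hL]; linarith
  exact ⟨_, tendsto_atTop_ciSup hmono ⟨M, fun x ⟨t, ht⟩ => ht ▸ hub t⟩⟩
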